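/- Let F be a finite field with q elements, let n ≥ 1, and let C be an F-linear subspace of the space of vectors Fin n → F that is closed under the cyclic shift σ (where σ(v)_i = v_{(i+1) mod n}). If C contains exactly q − 1 vectors of full Hamming weight n, then there exists a unique u ∈ F with u ≠ 0 and u^n = 1 such that the set of vectors of C of Hamming weight n is exactly { (λ·u^i)_{i=0}^{n−1} : λ ∈ F, λ ≠ 0 }. -/

import Mathlib

lemma fw_iff {F : Type*} [Field F] [DecidableEq F] {n : ℕ} (c : Fin n → F) :
    hammingNorm c = n ↔ ∀ i, c i ≠ 0 := by
  unfold hammingNorm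
  constructor
  · intro h i
    have h1 : ({i | c i ≠ 0} : Finset (Fin n)) = Finset.univ :=
      Finset.eq_univ_of_card _ (by simpa using h)
    have := Finset.mem_filter.mp (h1 ▸ Finset.mem_univ i)
    exact this.2
  · intro h
    rw [Finset.filter_true_of_mem (fun i _ => h i)]
    simp

/-- If a cyclic (shift-invariant) linear code `C ⊆ Fⁿ` over a finite field `F` with `q`
elements contains exactly `q − 1` vectors of full Hamming weight `n`, then there is a
unique `u ∈ F`, `u ≠ 0`, `u^n = 1`, such that the full-weight vectors of `C` are exactly
the vectors `(λ·u^i)_{i=0}^{n−1}` with `λ ≠ 0`. -/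
theorem full_weight_words_of_cyclic_code
    (F : Type*) [Field F] [Fintype F] [DecidableEq F] (q n : ℕ)
    (hq : Fintype.card F = q) (hn : 1 ≤ n)
    (C : Submodule F (Fin n → F))
    (hshift : ∀ c ∈ C,
      (fun i : Fin n => c ⟨((i : ℕ) + 1) % n, Nat.mod_lt _ (by omega)⟩) ∈ C)
    (hcount : {c : Fin n → F | c ∈ C ∧ hammingNorm c = n}.ncard = q - 1) :
    ∃! u : F, u ≠ 0 ∧ u ^ n = 1 ∧
      {c : Fin n → F | c ∈ C ∧ hammingNorm c = n}
        = {c : Fin n → F | ∃ lam : F, lam ≠ 0 ∧ c = fun i : Fin n => lam * u ^ (i : ℕ)} := by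
  set S := {c : Fin n → F | c ∈ C ∧ hammingNorm c = n} with hSdef
  have hq2 : 2 ≤ q := hq ▸ Fintype.one_lt_card
  have hSne : S.Nonempty := Set.nonempty_of_ncard_ne_zero (by rw [hcount]; omega)
  obtain ⟨c₀, hc₀C, hc₀w⟩ := hSne
  have hc₀ : ∀ i, c₀ i ≠ 0 := (fw_iff c₀).mp hc₀w
  have hc₀ne : c₀ ≠ 0 := fun h => hc₀ ⟨0, hn⟩ (by simp [h])
  -- all nonzero scalar multiples of c₀ are in S, and they exhaust S
  set T := (fun lam : F => lam • c₀) '' {lam : F | lam ≠ 0} with hTdef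
  have hTS : T ⊆ S := by
    rintro _ ⟨lam, hlam, rfl⟩
    refine ⟨C.smul_mem lam hc₀C, (fw_iff _).mpr fun i => ?_⟩
    exact mul_ne_zero hlam (hc₀ i)
  have hTcard : T.ncard = q - 1 := by
    rw [hTdef, Set.ncard_image_of_injective _ (smul_left_injective F hc₀ne),
      Set.ncard_eq_toFinset_card']
    simp [Finset.filter_ne', hq]
  have hST : S = T :=
    (Set.eq_of_subset_of_ncard_le hTS (by rw [hTcard, hcount]) (Set.toFinite S)).symm
  -- the shifted word is a scalar multiple of c₀
  set σc : Fin n → F := fun i : Fin n => c₀ ⟨((i : ℕ) + 1) % n, Nat.mod_lt _ (by omega)⟩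
    with hσ
  have hσS : σc ∈ S := ⟨hshift c₀ hc₀C, (fw_iff _).mpr fun i => hc₀ _⟩
  rw [hST] at hσS
  obtain ⟨u, hu, huc⟩ := hσS
  -- entries of c₀ follow a geometric progression
  have key : ∀ k (hk : k < n), c₀ ⟨k, hk⟩ = c₀ ⟨0, hn⟩ * u ^ k := by
    intro k
    induction k with
    | zero => intro hk; simp
    | succ m ih =>
      intro hk
      have hm : m < n := by omega
      have := congrFun huc ⟨m, hm⟩
      have hmod : (m + 1) % n = m + 1 := Nat.mod_eq_of_lt hk
      simp only [hσ, hmod, Pi.smul_apply, smul_eq_mul] at this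
      rw [← this, ih hm]
      ring
  have hupow : u ^ n = 1 := by
    have hm : n - 1 < n := by omega
    have := congrFun huc ⟨n - 1, hm⟩
    have hmod : (n - 1 + 1) % n = 0 := by
      have : n - 1 + 1 = n := by omega
      simp [this]
    simp only [hσ, hmod, Pi.smul_apply, smul_eq_mul, key (n - 1) hm] at this
    have h0 := hc₀ ⟨0, hn⟩
    have h2 : c₀ ⟨0, hn⟩ * (u * u ^ (n - 1)) = c₀ ⟨0, hn⟩ * 1 := by
      linear_combination this
    have huu : u * u ^ (n - 1) = 1 := mul_left_cancel₀ h0 h2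
    calc u ^ n = u * u ^ (n - 1) := by
          rw [← pow_succ']; congr 1; omega
      _ = 1 := huu
  have hc₀eq : c₀ = fun i : Fin n => c₀ ⟨0, hn⟩ * u ^ (i : ℕ) := by
    ext ⟨k, hk⟩
    exact key k hk
  set a := c₀ ⟨0, hn⟩ with ha
  have ha0 : a ≠ 0 := hc₀ _
  have hset : S = {c : Fin n → F | ∃ lam : F, lam ≠ 0 ∧
      c = fun i : Fin n => lam * u ^ (i : ℕ)} := by
    rw [hST, hTdef]
    ext c
    constructor
    · rintro ⟨lam, hlam, rfl⟩
      exact ⟨lam * a, mul_ne_zero hlam ha0, by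
        rw [hc₀eq]; ext i; simp [mul_assoc]⟩
    · rintro ⟨lam, hlam, rfl⟩
      refine ⟨lam * a⁻¹, mul_ne_zero hlam (inv_ne_zero ha0), ?_⟩
      rw [hc₀eq]; ext i
      simp only [Pi.smul_apply, smul_eq_mul]
      field_simp
  refine ⟨u, ⟨hu, hupow, hset⟩, ?_⟩
  rintro v ⟨hv, hvpow, hvset⟩
  -- uniqueness
  have hmem : (fun i : Fin n => (1 : F) * v ^ (i : ℕ)) ∈ S := by
    rw [hvset]; exact ⟨1, one_ne_zero, rfl⟩
  rw [hset] at hmem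
  obtain ⟨lam, hlam, heq⟩ := hmem
  have h0 := congrFun heq ⟨0, hn⟩
  simp at h0
  rcases Nat.lt_or_ge 1 n with h1n | h1n
  · have h1 := congrFun heq ⟨1, h1n⟩
    simpa [← h0] using h1
  · have hn1 : n = 1 := by omega
    rw [hn1, pow_one] at hvpow hupow
    rw [hvpow, hupow]
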